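/- Every sequent derivable in EQ₁₂ (with cut) has a cut-free semishortening derivation in EQ₁₂, with respect to any antireflexive binary relation ≺ on terms. -/

import Mathlib

inductive Tm : Type
  | var : Nat → Tm
  | const : Nat → Tm
  | app : Nat → Tm → Tm

def Tm.subst (v : Nat) (r : Tm) : Tm → Tm
  | .var w => if w = v then r else .var w
  | .const c => .const c
  | .app f t => .app f (Tm.subst v r t)

def Tm.count (v : Nat) : Tm → Nat
  | .var w => if w = v then 1 else 0
  | .const _ => 0
  | .app _ t => t.count v

inductive Fml : Type
  | eq : Tm → Tm → Fml
  | atom : Nat → Tm → Fml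
  | imp : Fml → Fml → Fml
  | and : Fml → Fml → Fml
  | or : Fml → Fml → Fml
  | neg : Fml → Fml
  | all : Nat → Fml → Fml
  | ex : Nat → Fml → Fml

def Fml.subst (v : Nat) (r : Tm) : Fml → Fml
  | .eq t u => .eq (Tm.subst v r t) (Tm.subst v r u)
  | .atom p t => .atom p (Tm.subst v r t)
  | .imp A B => .imp (Fml.subst v r A) (Fml.subst v r B)
  | .and A B => .and (Fml.subst v r A) (Fml.subst v r B)
  | .or A B => .or (Fml.subst v r A) (Fml.subst v r B)
  | .neg A => .neg (Fml.subst v r A)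
  | .all x A => .all x (if x = v then A else Fml.subst v r A)
  | .ex x A => .ex x (if x = v then A else Fml.subst v r A)

def Fml.count (v : Nat) : Fml → Nat
  | .eq t u => t.count v + u.count v
  | .atom _ t => t.count v
  | .imp A B => A.count v + B.count v
  | .and A B => A.count v + B.count v
  | .or A B => A.count v + B.count v
  | .neg A => A.count v
  | .all x A => if x = v then 0 else A.count v
  | .ex x A => if x = v then 0 else A.count v

/-- Tags for the equality rules of the equational sequent calculi. -/
inductive EqRule | r1 | r2 | l1 | l2 | cng
  deriving DecidableEq

/-- Derivability in the equational sequent calculus.  Sequents have the form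
`Γ ⇒ F` with `Γ : List Fml` and `F : Fml`.  The calculus has logical axioms
`F ⇒ F`, reflexivity axioms `⇒ t = t`, the weak left structural rules
(weakening, exchange, contraction), the cut rule (enabled when `cut = true`),
and the equality rules `=₁`, `=₂`, `=₁ˡ`, `=₂ˡ` and `CNG`, each guarded by the
side condition `ok tag F v r s` (where `F` is the changing formula, `v` the
substituted variable and `r`, `s` the terms involved). -/
inductive Der (ok : EqRule → Fml → Nat → Tm → Tm → Prop) (cut : Bool) :
    List Fml → Fml → Prop
  | ax (F : Fml) : Der ok cut [F] F
  | refl (t : Tm) : Der ok cut [] (.eq t t)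
  | wk {Γ H} (F) : Der ok cut Γ H → Der ok cut (F :: Γ) H
  | exch {Γ₁ Γ₂ F G H} : Der ok cut (Γ₁ ++ F :: G :: Γ₂) H →
      Der ok cut (Γ₁ ++ G :: F :: Γ₂) H
  | contr {Γ F H} : Der ok cut (F :: F :: Γ) H → Der ok cut (F :: Γ) H
  | cutr {Γ Λ F H} : cut = true → Der ok cut Γ F → Der ok cut (F :: Λ) H →
      Der ok cut (Γ ++ Λ) H
  | eq1 {Γ F v r s} : ok .r1 F v r s → Der ok cut Γ (F.subst v r) →
      Der ok cut (.eq r s :: Γ) (F.subst v s)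
  | eq2 {Γ F v r s} : ok .r2 F v r s → Der ok cut Γ (F.subst v r) →
      Der ok cut (.eq s r :: Γ) (F.subst v s)
  | eq1l {Γ F v r s H} : ok .l1 F v r s → Der ok cut (F.subst v r :: Γ) H →
      Der ok cut (F.subst v s :: .eq r s :: Γ) H
  | eq2l {Γ F v r s H} : ok .l2 F v r s → Der ok cut (F.subst v r :: Γ) H →
      Der ok cut (F.subst v s :: .eq s r :: Γ) H
  | cng {Γ Λ F v r s} : ok .cng F v r s → Der ok cut Γ (F.subst v r) →
      Der ok cut Λ (.eq r s) → Der ok cut (Γ ++ Λ) (F.subst v s)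

/-- The side condition allowing exactly the equality rules in `tags`,
with no further restriction. -/
def allow (tags : List EqRule) : EqRule → Fml → Nat → Tm → Tm → Prop :=
  fun t _ _ _ _ => t ∈ tags

/-- The semishortening side condition relative to `prec`: `=₁` and `=₁ˡ`
inferences must be shortening (`r ≺ s`), while `=₂` and `=₂ˡ` inferences must
be nonlengthening (`¬ s ≺ r`); `CNG` is not allowed. -/
def semiOk (prec : Tm → Tm → Prop) : EqRule → Fml → Nat → Tm → Tm → Prop
  | .r1, _, _, r, s => prec r s
  | .l1, _, _, r, s => prec r s
  | .r2, _, _, r, s => ¬ prec s r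
  | .l2, _, _, r, s => ¬ prec s r
  | .cng, _, _, _, _ => False

set_option maxHeartbeats 1000000

deriving instance DecidableEq for Tm
deriving instance DecidableEq for Fml

namespace CFS

/-! ### Term spines -/

def put : List Nat → Tm → Tm
  | [], b => b
  | f :: p, b => .app f (put p b)

@[simp] lemma put_nil (b : Tm) : put [] b = b := rfl
@[simp] lemma put_cons (f : Nat) (p : List Nat) (b : Tm) :
    put (f :: p) b = .app f (put p b) := rfl

lemma put_append (p q : List Nat) (b : Tm) : put (p ++ q) b = put p (put q b) := by
  induction p with
  | nil => rfl
  | cons f p ih => simp [ih]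

lemma put_overlap : ∀ (p : List Nat) (a : Tm) (q : List Nat) (b : Tm),
    put p a = put q b →
    (∃ c, q = p ++ c ∧ a = put c b) ∨ (∃ c, p = q ++ c ∧ b = put c a)
  | [], a, q, b, h => Or.inl ⟨q, rfl, h⟩
  | f :: p, a, [], b, h => Or.inr ⟨f :: p, rfl, h.symm⟩
  | f :: p, a, g :: q, b, h => by
      simp only [put_cons, Tm.app.injEq] at h
      obtain ⟨rfl, h2⟩ := h
      rcases put_overlap p a q b h2 with ⟨c, rfl, hc⟩ | ⟨c, rfl, hc⟩
      · exact Or.inl ⟨c, rfl, hc⟩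
      · exact Or.inr ⟨c, rfl, hc⟩

def sp : Tm → List Nat
  | .var _ => []
  | .const _ => []
  | .app f t => f :: sp t

def bs : Tm → Tm
  | .var w => .var w
  | .const k => .const k
  | .app _ t => bs t

lemma subst_bs_var : ∀ {t : Tm} {v : Nat}, bs t = .var v → ∀ (c : Tm),
    Tm.subst v c t = put (sp t) c
  | .var w, v, h, c => by
      simp only [bs, Tm.var.injEq] at h
      simp [Tm.subst, h, sp]
  | .const k, v, h, c => by simp [bs] at h
  | .app f t, v, h, c => by
      simp only [bs] at h
      simp [Tm.subst, sp, subst_bs_var h c]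

lemma subst_bs_ne : ∀ {t : Tm} {v : Nat}, bs t ≠ .var v → ∀ (c : Tm),
    Tm.subst v c t = t
  | .var w, v, h, c => by
      simp only [bs, ne_eq, Tm.var.injEq] at h
      simp [Tm.subst, h]
  | .const k, v, h, c => rfl
  | .app f t, v, h, c => by
      simp only [bs, ne_eq] at h
      simp [Tm.subst, subst_bs_ne h c]

def bnd : Tm → Nat
  | .var w => w + 1
  | .const _ => 0
  | .app _ t => bnd t

def fbnd : Fml → Nat
  | .eq a b => max (bnd a) (bnd b)
  | .atom _ t => bnd t
  | .imp A B => max (fbnd A) (fbnd B)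
  | .and A B => max (fbnd A) (fbnd B)
  | .or A B => max (fbnd A) (fbnd B)
  | .neg A => fbnd A
  | .all x A => max (x + 1) (fbnd A)
  | .ex x A => max (x + 1) (fbnd A)

@[simp] lemma bnd_put (p : List Nat) (b : Tm) : bnd (put p b) = bnd b := by
  induction p with
  | nil => rfl
  | cons f p ih => simp [bnd, ih]

lemma tsubst_fresh : ∀ {t : Tm} {v : Nat}, bnd t ≤ v → ∀ (c : Tm), Tm.subst v c t = t
  | .var w, v, h, c => by
      simp only [bnd] at h
      have : w ≠ v := by omega
      simp [Tm.subst, this]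
  | .const k, v, h, c => rfl
  | .app f t, v, h, c => by
      simp only [bnd] at h
      simp [Tm.subst, tsubst_fresh h c]

lemma fsubst_fresh : ∀ {F : Fml} {v : Nat}, fbnd F ≤ v → ∀ (c : Tm), Fml.subst v c F = F
  | .eq a b, v, h, c => by
      simp only [fbnd, max_le_iff] at h
      simp [Fml.subst, tsubst_fresh h.1, tsubst_fresh h.2]
  | .atom n t, v, h, c => by
      simp only [fbnd] at h
      simp [Fml.subst, tsubst_fresh h]
  | .imp A B, v, h, c => by
      simp only [fbnd, max_le_iff] at h
      simp [Fml.subst, fsubst_fresh h.1, fsubst_fresh h.2]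
  | .and A B, v, h, c => by
      simp only [fbnd, max_le_iff] at h
      simp [Fml.subst, fsubst_fresh h.1, fsubst_fresh h.2]
  | .or A B, v, h, c => by
      simp only [fbnd, max_le_iff] at h
      simp [Fml.subst, fsubst_fresh h.1, fsubst_fresh h.2]
  | .neg A, v, h, c => by
      simp only [fbnd] at h
      simp [Fml.subst, fsubst_fresh h]
  | .all x A, v, h, c => by
      simp only [fbnd, max_le_iff] at h
      have hx : x ≠ v := by omega
      simp [Fml.subst, hx, fsubst_fresh h.2]
  | .ex x A, v, h, c => by
      simp only [fbnd, max_le_iff] at h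
      have hx : x ≠ v := by omega
      simp [Fml.subst, hx, fsubst_fresh h.2]

lemma subst_put (v : Nat) (c : Tm) (p : List Nat) (b : Tm) :
    Tm.subst v c (put p b) = put p (Tm.subst v c b) := by
  induction p with
  | nil => rfl
  | cons f p ih => simp [Tm.subst, ih]

lemma tcomp (v : Nat) (c T : Tm) : ∀ t,
    Tm.subst v c (Tm.subst v T t) = Tm.subst v (Tm.subst v c T) t
  | .var w => by by_cases h : w = v <;> simp [Tm.subst, h]
  | .const k => rfl
  | .app f t => by simp [Tm.subst, tcomp v c T t]

lemma fcomp (v : Nat) (c T : Tm) : ∀ F,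
    Fml.subst v c (Fml.subst v T F) = Fml.subst v (Tm.subst v c T) F
  | .eq a b => by simp [Fml.subst, tcomp]
  | .atom n t => by simp [Fml.subst, tcomp]
  | .imp A B => by simp [Fml.subst, fcomp v c T A, fcomp v c T B]
  | .and A B => by simp [Fml.subst, fcomp v c T A, fcomp v c T B]
  | .or A B => by simp [Fml.subst, fcomp v c T A, fcomp v c T B]
  | .neg A => by simp [Fml.subst, fcomp v c T A]
  | .all x A => by
      by_cases h : x = v <;> simp [Fml.subst, h, fcomp v c T A]
  | .ex x A => by
      by_cases h : x = v <;> simp [Fml.subst, h, fcomp v c T A]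

lemma trename : ∀ {t : Tm} {v' : Nat}, bnd t ≤ v' → ∀ (v : Nat) (c : Tm),
    Tm.subst v' c (Tm.subst v (.var v') t) = Tm.subst v c t
  | .var w, v', h, v, c => by
      simp only [bnd] at h
      by_cases hw : w = v
      · simp [Tm.subst, hw]
      · have : w ≠ v' := by omega
        simp [Tm.subst, hw, this]
  | .const k, v', h, v, c => rfl
  | .app f t, v', h, v, c => by
      simp only [bnd] at h
      simp [Tm.subst, trename h v c]

lemma frename : ∀ {F : Fml} {v' : Nat}, fbnd F ≤ v' → ∀ (v : Nat) (c : Tm),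
    Fml.subst v' c (Fml.subst v (.var v') F) = Fml.subst v c F
  | .eq a b, v', h, v, c => by
      simp only [fbnd, max_le_iff] at h
      simp [Fml.subst, trename h.1, trename h.2]
  | .atom n t, v', h, v, c => by
      simp only [fbnd] at h
      simp [Fml.subst, trename h]
  | .imp A B, v', h, v, c => by
      simp only [fbnd, max_le_iff] at h
      simp [Fml.subst, frename h.1, frename h.2]
  | .and A B, v', h, v, c => by
      simp only [fbnd, max_le_iff] at h
      simp [Fml.subst, frename h.1, frename h.2]
  | .or A B, v', h, v, c => by
      simp only [fbnd, max_le_iff] at h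
      simp [Fml.subst, frename h.1, frename h.2]
  | .neg A, v', h, v, c => by
      simp only [fbnd] at h
      simp [Fml.subst, frename h]
  | .all x A, v', h, v, c => by
      simp only [fbnd, max_le_iff] at h
      have hx' : x ≠ v' := by omega
      by_cases hx : x = v
      · simp [Fml.subst, hx, hx', fsubst_fresh h.2]
      · simp [Fml.subst, hx, hx', frename h.2]
  | .ex x A, v', h, v, c => by
      simp only [fbnd, max_le_iff] at h
      have hx' : x ≠ v' := by omega
      by_cases hx : x = v
      · simp [Fml.subst, hx, hx', fsubst_fresh h.2]
      · simp [Fml.subst, hx, hx', frename h.2]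

end CFS
namespace CFS

/-! ### The set-based semishortening calculus -/

/-- `Prim prec S u t`: a member equation of `S` primitively rewrites `u` to `t`
(downwards, on the right of a sequent). -/
def Prim (prec : Tm → Tm → Prop) (S : Fml → Prop) (u t : Tm) : Prop :=
  ∃ A B, S (.eq A B) ∧ ((prec A B ∧ A = u ∧ B = t) ∨ (¬ prec A B ∧ B = u ∧ A = t))

def ins (A : Fml) (S : Fml → Prop) : Fml → Prop := fun x => x = A ∨ S x

/-- Set-based, fuelled version of the cut-free semishortening calculus. -/
inductive Dh (prec : Tm → Tm → Prop) : Nat → (Fml → Prop) → Fml → Prop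
  | ax {n : Nat} {S : Fml → Prop} {F : Fml} : S F → Dh prec n S F
  | refl {n : Nat} {S : Fml → Prop} (t : Tm) : Dh prec n S (.eq t t)
  | r1 {n : Nat} {S : Fml → Prop} {F : Fml} {v : Nat} {r s : Tm} :
      prec r s → S (.eq r s) →
      Dh prec n S (F.subst v r) → Dh prec (n+1) S (F.subst v s)
  | r2 {n : Nat} {S : Fml → Prop} {F : Fml} {v : Nat} {r s : Tm} :
      ¬ prec s r → S (.eq s r) →
      Dh prec n S (F.subst v r) → Dh prec (n+1) S (F.subst v s)
  | l1 {n : Nat} {S : Fml → Prop} {F : Fml} {v : Nat} {r s : Tm} {H : Fml} :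
      prec r s → S (.eq r s) → S (F.subst v s) →
      Dh prec n (ins (F.subst v r) S) H → Dh prec (n+1) S H
  | l2 {n : Nat} {S : Fml → Prop} {F : Fml} {v : Nat} {r s : Tm} {H : Fml} :
      ¬ prec s r → S (.eq s r) → S (F.subst v s) →
      Dh prec n (ins (F.subst v r) S) H → Dh prec (n+1) S H

variable {prec : Tm → Tm → Prop}

lemma prim_mono {S S' : Fml → Prop} (hS : ∀ x, S x → S' x) {u t : Tm}
    (h : Prim prec S u t) : Prim prec S' u t := by
  obtain ⟨A, B, hAB, hc⟩ := h
  exact ⟨A, B, hS _ hAB, hc⟩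

lemma dh_mono : ∀ {n S X}, Dh prec n S X → ∀ {S' : Fml → Prop}, (∀ x, S x → S' x) →
    Dh prec n S' X := by
  intro n S X d
  induction d with
  | ax h => exact fun hS => .ax (hS _ h)
  | refl t => exact fun _ => .refl t
  | r1 hp hS _ ih => exact fun hS' => .r1 hp (hS' _ hS) (ih hS')
  | r2 hp hS _ ih => exact fun hS' => .r2 hp (hS' _ hS) (ih hS')
  | l1 hp hS hm _ ih =>
      exact fun hS' => .l1 hp (hS' _ hS) (hS' _ hm)
        (ih (fun x hx => hx.imp id (hS' x)))
  | l2 hp hS hm _ ih =>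
      exact fun hS' => .l2 hp (hS' _ hS) (hS' _ hm)
        (ih (fun x hx => hx.imp id (hS' x)))

lemma primR {S : Fml → Prop} {u t : Tm} (h : Prim prec S u t) (F : Fml) (v : Nat)
    {n : Nat} (d : Dh prec n S (F.subst v u)) : ∃ m, Dh prec m S (F.subst v t) := by
  obtain ⟨A, B, hS, hc⟩ := h
  rcases hc with ⟨hp, rfl, rfl⟩ | ⟨hp, rfl, rfl⟩
  · exact ⟨n + 1, .r1 hp hS d⟩
  · exact ⟨n + 1, .r2 hp hS d⟩

/-! ### Parallel rewriting relations -/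

/-- one (possibly trivial) suffix rewrite `u → t` of a term -/
def QTm (u t : Tm) (x y : Tm) : Prop := x = y ∨ ∃ p, x = put p u ∧ y = put p t

/-- one (possibly trivial) suffix rewrite of a term along the context
orientation of a member equation of `S` -/
def PTm (prec : Tm → Tm → Prop) (S : Fml → Prop) (x y : Tm) : Prop :=
  x = y ∨ ∃ p α β, Prim prec S β α ∧ x = put p α ∧ y = put p β

lemma qtm_rfl (u t x : Tm) : QTm u t x x := Or.inl rfl
lemma ptm_rfl (S : Fml → Prop) (x : Tm) : PTm prec S x x := Or.inl rfl

lemma ptm_mono {S S' : Fml → Prop} (hS : ∀ x, S x → S' x) {x y : Tm}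
    (h : PTm prec S x y) : PTm prec S' x y := by
  rcases h with rfl | ⟨p, α, β, hP, rfl, rfl⟩
  · exact Or.inl rfl
  · exact Or.inr ⟨p, α, β, prim_mono hS hP, rfl, rfl⟩

/-- congruence lift of a term relation to formulas -/
inductive Lift (R : Tm → Tm → Prop) : Fml → Fml → Prop
  | eq {a a' b b'} : R a a' → R b b' → Lift R (.eq a b) (.eq a' b')
  | atom {t t'} (n) : R t t' → Lift R (.atom n t) (.atom n t')
  | imp {A A' B B'} : Lift R A A' → Lift R B B' → Lift R (.imp A B) (.imp A' B')
  | and {A A' B B'} : Lift R A A' → Lift R B B' → Lift R (.and A B) (.and A' B')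
  | or {A A' B B'} : Lift R A A' → Lift R B B' → Lift R (.or A B) (.or A' B')
  | neg {A A'} : Lift R A A' → Lift R (.neg A) (.neg A')
  | all {A A'} (x) : Lift R A A' → Lift R (.all x A) (.all x A')
  | ex {A A'} (x) : Lift R A A' → Lift R (.ex x A) (.ex x A')

lemma lift_rfl {R : Tm → Tm → Prop} (h : ∀ t, R t t) : ∀ F, Lift R F F
  | .eq a b => .eq (h a) (h b)
  | .atom n t => .atom n (h t)
  | .imp A B => .imp (lift_rfl h A) (lift_rfl h B)
  | .and A B => .and (lift_rfl h A) (lift_rfl h B)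
  | .or A B => .or (lift_rfl h A) (lift_rfl h B)
  | .neg A => .neg (lift_rfl h A)
  | .all x A => .all x (lift_rfl h A)
  | .ex x A => .ex x (lift_rfl h A)

lemma lift_mono {R R' : Tm → Tm → Prop} (h : ∀ x y, R x y → R' x y) :
    ∀ {F G}, Lift R F G → Lift R' F G := by
  intro F G hl
  induction hl with
  | eq h1 h2 => exact .eq (h _ _ h1) (h _ _ h2)
  | atom n h1 => exact .atom n (h _ _ h1)
  | imp _ _ ih1 ih2 => exact .imp ih1 ih2
  | and _ _ ih1 ih2 => exact .and ih1 ih2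
  | or _ _ ih1 ih2 => exact .or ih1 ih2
  | neg _ ih => exact .neg ih
  | all x _ ih => exact .all x ih
  | ex x _ ih => exact .ex x ih

lemma qsub_tm (u t : Tm) (a : Tm) (v : Nat) :
    QTm u t (Tm.subst v u a) (Tm.subst v t a) := by
  by_cases h : bs a = .var v
  · rw [subst_bs_var h, subst_bs_var h]
    exact Or.inr ⟨sp a, rfl, rfl⟩
  · rw [subst_bs_ne h, subst_bs_ne h]
    exact Or.inl rfl

/-- substituting two different terms for a variable yields a `QTm`-related pair -/
lemma qsub (u t : Tm) : ∀ (F : Fml) (v : Nat),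
    Lift (QTm u t) (F.subst v u) (F.subst v t)
  | .eq a b, v => by
      simp only [Fml.subst]
      exact .eq (qsub_tm u t a v) (qsub_tm u t b v)
  | .atom n a, v => by
      simp only [Fml.subst]
      exact .atom n (qsub_tm u t a v)
  | .imp A B, v => by
      simp only [Fml.subst]; exact .imp (qsub u t A v) (qsub u t B v)
  | .and A B, v => by
      simp only [Fml.subst]; exact .and (qsub u t A v) (qsub u t B v)
  | .or A B, v => by
      simp only [Fml.subst]; exact .or (qsub u t A v) (qsub u t B v)
  | .neg A, v => by
      simp only [Fml.subst]; exact .neg (qsub u t A v)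
  | .all x A, v => by
      simp only [Fml.subst]
      by_cases h : x = v
      · subst h; simp only [if_pos rfl]; exact .all x (lift_rfl (qtm_rfl u t) A)
      · simp only [if_neg h]; exact .all x (qsub u t A v)
  | .ex x A, v => by
      simp only [Fml.subst]
      by_cases h : x = v
      · subst h; simp only [if_pos rfl]; exact .ex x (lift_rfl (qtm_rfl u t) A)
      · simp only [if_neg h]; exact .ex x (qsub u t A v)

/-- rewriting (upwards) along the context orientation of a primitive rewrite -/
lemma ctxsub {S : Fml → Prop} {u t : Tm} (h : Prim prec S u t) (F : Fml) (v : Nat) :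
    Lift (PTm prec S) (F.subst v t) (F.subst v u) :=
  lift_mono (fun x y hq => by
    rcases hq with rfl | ⟨p, rfl, rfl⟩
    · exact Or.inl rfl
    · exact Or.inr ⟨p, t, u, h, rfl, rfl⟩) (qsub t u F v)

/-- realization of a single-equation parallel rewrite as a substitution pair -/
lemma realT {u t x y : Tm} (h : QTm u t x y) (v : Nat) (hb : bnd x ≤ v) :
    ∃ f : Tm, Tm.subst v u f = x ∧ Tm.subst v t f = y := by
  rcases h with rfl | ⟨p, rfl, rfl⟩
  · exact ⟨x, tsubst_fresh hb u, tsubst_fresh hb t⟩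
  · refine ⟨put p (.var v), ?_, ?_⟩ <;> simp [subst_put, Tm.subst]

lemma real {u t : Tm} : ∀ {X Y : Fml}, Lift (QTm u t) X Y → ∀ (v : Nat), fbnd X ≤ v →
    ∃ F : Fml, F.subst v u = X ∧ F.subst v t = Y := by
  intro X Y h
  induction h with
  | @eq a a' b b' h1 h2 =>
      intro v hb
      simp only [fbnd, max_le_iff] at hb
      obtain ⟨f1, hf1, hf1'⟩ := realT h1 v hb.1
      obtain ⟨f2, hf2, hf2'⟩ := realT h2 v hb.2
      exact ⟨.eq f1 f2, by simp [Fml.subst, hf1, hf2], by simp [Fml.subst, hf1', hf2']⟩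
  | @atom a a' n h1 =>
      intro v hb
      simp only [fbnd] at hb
      obtain ⟨f1, hf1, hf1'⟩ := realT h1 v hb
      exact ⟨.atom n f1, by simp [Fml.subst, hf1], by simp [Fml.subst, hf1']⟩
  | @imp A A' B B' _ _ ih1 ih2 =>
      intro v hb
      simp only [fbnd, max_le_iff] at hb
      obtain ⟨F1, hF1, hF1'⟩ := ih1 v hb.1
      obtain ⟨F2, hF2, hF2'⟩ := ih2 v hb.2
      exact ⟨.imp F1 F2, by simp [Fml.subst, hF1, hF2], by simp [Fml.subst, hF1', hF2']⟩
  | @and A A' B B' _ _ ih1 ih2 =>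
      intro v hb
      simp only [fbnd, max_le_iff] at hb
      obtain ⟨F1, hF1, hF1'⟩ := ih1 v hb.1
      obtain ⟨F2, hF2, hF2'⟩ := ih2 v hb.2
      exact ⟨.and F1 F2, by simp [Fml.subst, hF1, hF2], by simp [Fml.subst, hF1', hF2']⟩
  | @or A A' B B' _ _ ih1 ih2 =>
      intro v hb
      simp only [fbnd, max_le_iff] at hb
      obtain ⟨F1, hF1, hF1'⟩ := ih1 v hb.1
      obtain ⟨F2, hF2, hF2'⟩ := ih2 v hb.2
      exact ⟨.or F1 F2, by simp [Fml.subst, hF1, hF2], by simp [Fml.subst, hF1', hF2']⟩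
  | @neg A A' _ ih =>
      intro v hb
      simp only [fbnd] at hb
      obtain ⟨F1, hF1, hF1'⟩ := ih v hb
      exact ⟨.neg F1, by simp [Fml.subst, hF1], by simp [Fml.subst, hF1']⟩
  | @all A A' x _ ih =>
      intro v hb
      simp only [fbnd, max_le_iff] at hb
      have hx : x ≠ v := by omega
      obtain ⟨F1, hF1, hF1'⟩ := ih v hb.2
      exact ⟨.all x F1, by simp [Fml.subst, hx, hF1], by simp [Fml.subst, hx, hF1']⟩
  | @ex A A' x _ ih =>
      intro v hb
      simp only [fbnd, max_le_iff] at hb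
      have hx : x ≠ v := by omega
      obtain ⟨F1, hF1, hF1'⟩ := ih v hb.2
      exact ⟨.ex x F1, by simp [Fml.subst, hx, hF1], by simp [Fml.subst, hx, hF1']⟩

end CFS
namespace CFS

variable {prec : Tm → Tm → Prop}

/-! ### Chains of single-equation rewrites -/

/-- chain of single-equation parallel rewrites on formulas, each step oriented
by a relation `C` -/
inductive ChF (C : Tm → Tm → Prop) : Fml → Fml → Prop
  | nil {Y} : ChF C Y Y
  | cons {u t : Tm} {X Z Y : Fml} : C u t → Lift (QTm u t) X Z → ChF C Z Y → ChF C X Y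

lemma chF_mono {C C' : Tm → Tm → Prop} (h : ∀ u t, C u t → C' u t) :
    ∀ {X Y}, ChF C X Y → ChF C' X Y := by
  intro X Y hc
  induction hc with
  | nil => exact .nil
  | cons hC hq _ ih => exact .cons (h _ _ hC) hq ih

lemma chF_append {C : Tm → Tm → Prop} : ∀ {X Z Y}, ChF C X Z → ChF C Z Y → ChF C X Y := by
  intro X Z Y h1 h2
  induction h1 with
  | nil => exact h2
  | cons hC hq _ ih => exact .cons hC hq (ih h2)

lemma chF_lift {C : Tm → Tm → Prop} (g : Fml → Fml)
    (hg : ∀ (u t : Tm) (X Y : Fml), Lift (QTm u t) X Y → Lift (QTm u t) (g X) (g Y)) :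
    ∀ {X Y}, ChF C X Y → ChF C (g X) (g Y) := by
  intro X Y hc
  induction hc with
  | nil => exact .nil
  | cons hC hq _ ih => exact .cons hC (hg _ _ _ _ hq) ih

/-- chain of single suffix rewrites on terms -/
inductive ChT (C : Tm → Tm → Prop) : Tm → Tm → Prop
  | nil {y} : ChT C y y
  | cons {u t y : Tm} (q : List Nat) : C u t → ChT C (put q t) y → ChT C (put q u) y

lemma chT_mono {C C' : Tm → Tm → Prop} (h : ∀ u t, C u t → C' u t) :
    ∀ {x y}, ChT C x y → ChT C' x y := by
  intro x y hc
  induction hc with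
  | nil => exact .nil
  | cons q hC _ ih => exact .cons q (h _ _ hC) ih

lemma chT_lift {C : Tm → Tm → Prop} (f : Tm → Fml)
    (hf : ∀ (u t : Tm) (q : List Nat), Lift (QTm u t) (f (put q u)) (f (put q t))) :
    ∀ {x y}, ChT C x y → ChF C (f x) (f y) := by
  intro x y hc
  induction hc with
  | nil => exact .nil
  | cons q hC _ ih => exact .cons hC (hf _ _ q) ih

/-- soundness of primitive chains -/
lemma rc_sound {S : Fml → Prop} : ∀ {X Y : Fml}, ChF (Prim prec S) X Y →
    ∀ {n}, Dh prec n S X → ∃ m, Dh prec m S Y := by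
  intro X Y hc
  induction hc with
  | nil => exact fun d => ⟨_, d⟩
  | @cons u t X Z Y hC hq _ ih =>
      intro n d
      obtain ⟨F, hF1, hF2⟩ := real hq (fbnd X) le_rfl
      obtain ⟨m, dZ⟩ := primR hC F (fbnd X) (hF1 ▸ d)
      exact ih (hF2 ▸ dZ)

/-! ### Context enrichment -/

/-- `e` arises from a member of `S` by one rewrite along a context
orientation; such formulas may be added to the context by a left rule. -/
def Enrich (prec : Tm → Tm → Prop) (S : Fml → Prop) (e : Fml) : Prop :=
  ∃ (M : Fml) (m : Nat) (α β : Tm),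
    Prim prec S β α ∧ S (M.subst m α) ∧ M.subst m β = e

lemma enrich_mono {S S' : Fml → Prop} (hS : ∀ x, S x → S' x) {e : Fml}
    (h : Enrich prec S e) : Enrich prec S' e := by
  obtain ⟨M, m, α, β, hP, hmem, he⟩ := h
  exact ⟨M, m, α, β, prim_mono hS hP, hS _ hmem, he⟩

lemma disch {S : Fml → Prop} {e : Fml} (he : Enrich prec S e) {n : Nat} {H : Fml}
    (d : Dh prec n (ins e S) H) : ∃ m, Dh prec m S H := by
  obtain ⟨M, m, α, β, ⟨A, B, hS, hc⟩, hmem, rfl⟩ := he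
  rcases hc with ⟨hp, rfl, rfl⟩ | ⟨hp, rfl, rfl⟩
  · exact ⟨n + 1, .l1 hp hS hmem d⟩
  · exact ⟨n + 1, .l2 hp hS hmem d⟩

def SE (S : Fml → Prop) (E : List Fml) : Fml → Prop := fun x => x ∈ E ∨ S x

lemma se_nil_sub {S : Fml → Prop} : ∀ x, SE S [] x → S x := by
  intro x hx
  rcases hx with h | h
  · cases h
  · exact h

lemma sub_se {S : Fml → Prop} (E : List Fml) : ∀ x, S x → SE S E x :=
  fun _ h => Or.inr h

lemma se_append_left {S : Fml → Prop} (E E' : List Fml) :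
    ∀ x, SE S E x → SE S (E ++ E') x := by
  intro x hx
  rcases hx with h | h
  · exact Or.inl (List.mem_append.2 (Or.inl h))
  · exact Or.inr h

lemma se_append_right {S : Fml → Prop} (E E' : List Fml) :
    ∀ x, SE S E' x → SE S (E ++ E') x := by
  intro x hx
  rcases hx with h | h
  · exact Or.inl (List.mem_append.2 (Or.inr h))
  · exact Or.inr h

lemma dischList {S : Fml → Prop} : ∀ (E : List Fml), (∀ e ∈ E, Enrich prec S e) →
    ∀ {n : Nat} {H : Fml}, Dh prec n (SE S E) H → ∃ m, Dh prec m S H := by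
  intro E
  induction E with
  | nil => exact fun _ _ _ d => ⟨_, dh_mono d se_nil_sub⟩
  | cons e E' ih =>
      intro hE n H d
      have d' : Dh prec n (ins e (SE S E')) H := by
        refine dh_mono d ?_
        intro x hx
        rcases hx with h | h
        · rcases List.mem_cons.1 h with rfl | h'
          · exact Or.inl rfl
          · exact Or.inr (Or.inl h')
        · exact Or.inr (Or.inr h)
      have he : Enrich prec (SE S E') e :=
        enrich_mono (sub_se E') (hE e (List.mem_cons_self (a := e) (l := E')))
      obtain ⟨m, d''⟩ := disch he d'
      exact ih (fun e' he' => hE e' (List.mem_cons_of_mem _ he')) d''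

/-! ### Derivable equations with common prefixes -/

lemma memEq {S : Fml → Prop} {A B : Tm} (h : S (.eq A B)) (p : List Nat) :
    ∃ m, Dh prec m S (.eq (put p A) (put p B)) := by
  by_cases hp : prec A B
  · have prim : Prim prec S A B := ⟨A, B, h, Or.inl ⟨hp, rfl, rfl⟩⟩
    have d0 : Dh prec 0 S (Fml.subst (bnd A) A (.eq (put p A) (put p (.var (bnd A))))) := by
      have : Fml.subst (bnd A) A (.eq (put p A) (put p (.var (bnd A))))
          = .eq (put p A) (put p A) := by
        simp [Fml.subst, subst_put, tsubst_fresh (le_refl (bnd A)), Tm.subst]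
      rw [this]; exact .refl _
    obtain ⟨m, d⟩ := primR prim _ _ d0
    refine ⟨m, ?_⟩
    have : Fml.subst (bnd A) B (.eq (put p A) (put p (.var (bnd A))))
        = .eq (put p A) (put p B) := by
      simp [Fml.subst, subst_put, tsubst_fresh (le_refl (bnd A)), Tm.subst]
    rwa [this] at d
  · have prim : Prim prec S B A := ⟨A, B, h, Or.inr ⟨hp, rfl, rfl⟩⟩
    have d0 : Dh prec 0 S (Fml.subst (bnd B) B (.eq (put p (.var (bnd B))) (put p B))) := by
      have : Fml.subst (bnd B) B (.eq (put p (.var (bnd B))) (put p B))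
          = .eq (put p B) (put p B) := by
        simp [Fml.subst, subst_put, tsubst_fresh (le_refl (bnd B)), Tm.subst]
      rw [this]; exact .refl _
    obtain ⟨m, d⟩ := primR prim _ _ d0
    refine ⟨m, ?_⟩
    have : Fml.subst (bnd B) A (.eq (put p (.var (bnd B))) (put p B))
        = .eq (put p A) (put p B) := by
      simp [Fml.subst, subst_put, tsubst_fresh (le_refl (bnd B)), Tm.subst]
    rwa [this] at d

lemma memEq' {S : Fml → Prop} {A B : Tm} (h : S (.eq A B)) (p : List Nat) :
    ∃ m, Dh prec m S (.eq (put p B) (put p A)) := by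
  by_cases hp : prec A B
  · have prim : Prim prec S A B := ⟨A, B, h, Or.inl ⟨hp, rfl, rfl⟩⟩
    have d0 : Dh prec 0 S (Fml.subst (bnd A) A (.eq (put p (.var (bnd A))) (put p A))) := by
      have : Fml.subst (bnd A) A (.eq (put p (.var (bnd A))) (put p A))
          = .eq (put p A) (put p A) := by
        simp [Fml.subst, subst_put, tsubst_fresh (le_refl (bnd A)), Tm.subst]
      rw [this]; exact .refl _
    obtain ⟨m, d⟩ := primR prim _ _ d0
    refine ⟨m, ?_⟩
    have : Fml.subst (bnd A) B (.eq (put p (.var (bnd A))) (put p A))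
        = .eq (put p B) (put p A) := by
      simp [Fml.subst, subst_put, tsubst_fresh (le_refl (bnd A)), Tm.subst]
    rwa [this] at d
  · have prim : Prim prec S B A := ⟨A, B, h, Or.inr ⟨hp, rfl, rfl⟩⟩
    have d0 : Dh prec 0 S (Fml.subst (bnd B) B (.eq (put p B) (put p (.var (bnd B))))) := by
      have : Fml.subst (bnd B) B (.eq (put p B) (put p (.var (bnd B))))
          = .eq (put p B) (put p B) := by
        simp [Fml.subst, subst_put, tsubst_fresh (le_refl (bnd B)), Tm.subst]
      rw [this]; exact .refl _
    obtain ⟨m, d⟩ := primR prim _ _ d0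
    refine ⟨m, ?_⟩
    have : Fml.subst (bnd B) A (.eq (put p B) (put p (.var (bnd B))))
        = .eq (put p B) (put p A) := by
      simp [Fml.subst, subst_put, tsubst_fresh (le_refl (bnd B)), Tm.subst]
    rwa [this] at d

end CFS
namespace CFS

variable {prec : Tm → Tm → Prop}

/-! ### Decomposition of parallel rewrites into chains (for the axiom case) -/

lemma ptmCh {S : Fml → Prop} (f : Tm → Fml)
    (hf : ∀ (u t : Tm) (q : List Nat), Lift (QTm u t) (f (put q u)) (f (put q t)))
    {x y : Tm} (h : PTm prec S x y) :
    ChF (fun a b => Prim prec S b a) (f x) (f y) := by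
  rcases h with rfl | ⟨p, α, β, hP, rfl, rfl⟩
  · exact .nil
  · exact .cons hP (hf α β p) .nil

lemma dec {S : Fml → Prop} : ∀ {X Y : Fml}, Lift (PTm prec S) X Y →
    ChF (fun a b => Prim prec S b a) X Y := by
  intro X Y h
  induction h with
  | @eq a a' b b' h1 h2 =>
      refine chF_append
        (ptmCh (fun z => .eq z b) (fun u t q => .eq (Or.inr ⟨q, rfl, rfl⟩) (Or.inl rfl)) h1)
        (ptmCh (fun z => .eq a' z) (fun u t q => .eq (Or.inl rfl) (Or.inr ⟨q, rfl, rfl⟩)) h2)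
  | @atom a a' n h1 =>
      exact ptmCh (fun z => .atom n z) (fun u t q => .atom n (Or.inr ⟨q, rfl, rfl⟩)) h1
  | @imp A A' B B' _ _ ih1 ih2 =>
      exact chF_append
        (chF_lift (fun X => .imp X B) (fun u t _ _ hq => .imp hq (lift_rfl (qtm_rfl u t) _)) ih1)
        (chF_lift (fun Z => .imp A' Z) (fun u t _ _ hq => .imp (lift_rfl (qtm_rfl u t) _) hq) ih2)
  | @and A A' B B' _ _ ih1 ih2 =>
      exact chF_append
        (chF_lift (fun X => .and X B) (fun u t _ _ hq => .and hq (lift_rfl (qtm_rfl u t) _)) ih1)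
        (chF_lift (fun Z => .and A' Z) (fun u t _ _ hq => .and (lift_rfl (qtm_rfl u t) _) hq) ih2)
  | @or A A' B B' _ _ ih1 ih2 =>
      exact chF_append
        (chF_lift (fun X => .or X B) (fun u t _ _ hq => .or hq (lift_rfl (qtm_rfl u t) _)) ih1)
        (chF_lift (fun Z => .or A' Z) (fun u t _ _ hq => .or (lift_rfl (qtm_rfl u t) _) hq) ih2)
  | @neg A A' _ ih => exact chF_lift (fun X => .neg X) (fun u t _ _ hq => .neg hq) ih
  | @all A A' x _ ih => exact chF_lift (fun X => .all x X) (fun u t _ _ hq => .all x hq) ih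
  | @ex A A' x _ ih => exact chF_lift (fun X => .ex x X) (fun u t _ _ hq => .ex x hq) ih

lemma axChain {C : Tm → Tm → Prop} : ∀ {X Y : Fml}, ChF C X Y →
    ∀ (S : Fml → Prop), (∀ a b, C a b → Prim prec S b a) → S X → ∃ m, Dh prec m S Y := by
  intro X Y hc
  induction hc with
  | nil => exact fun S _ hX => ⟨0, .ax hX⟩
  | @cons u t X Z Y hC hq _ ih =>
      intro S hCS hX
      obtain ⟨F, hF1, hF2⟩ := real hq (fbnd X) le_rfl
      obtain ⟨A, B, hS, hcase⟩ := hCS _ _ hC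
      obtain ⟨m, d⟩ := ih (ins Z S)
        (fun a b hab => prim_mono (fun x hx => Or.inr hx) (hCS a b hab)) (Or.inl rfl)
      rcases hcase with ⟨hp, rfl, rfl⟩ | ⟨hp, rfl, rfl⟩
      · -- prec A B, A = t, B = u : use l1
        refine ⟨m + 1, .l1 hp hS (hF1 ▸ hX) ?_⟩
        rw [hF2]; exact d
      · -- ¬ prec A B, B = t, A = u : use l2
        refine ⟨m + 1, .l2 hp hS (hF1 ▸ hX) ?_⟩
        rw [hF2]; exact d

/-! ### The reflexivity case -/

lemma reflStep1 {S : Fml → Prop} {α β : Tm} (hP : Prim prec S β α) (p : List Nat) :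
    ∃ m, Dh prec m S (.eq (put p α) (put p β)) := by
  have d0 : Dh prec 0 S (Fml.subst (bnd β) β (.eq (put p (.var (bnd β))) (put p β))) := by
    have : Fml.subst (bnd β) β (.eq (put p (.var (bnd β))) (put p β))
        = .eq (put p β) (put p β) := by
      simp [Fml.subst, subst_put, tsubst_fresh (le_refl (bnd β)), Tm.subst]
    rw [this]; exact .refl _
  obtain ⟨m, d⟩ := primR hP _ _ d0
  refine ⟨m, ?_⟩
  have : Fml.subst (bnd β) α (.eq (put p (.var (bnd β))) (put p β))
      = .eq (put p α) (put p β) := by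
    simp [Fml.subst, subst_put, tsubst_fresh (le_refl (bnd β)), Tm.subst]
  rwa [this] at d

lemma reflStep1' {S : Fml → Prop} {α β : Tm} (hP : Prim prec S β α) (p : List Nat) :
    ∃ m, Dh prec m S (.eq (put p β) (put p α)) := by
  have d0 : Dh prec 0 S (Fml.subst (bnd β) β (.eq (put p β) (put p (.var (bnd β))))) := by
    have : Fml.subst (bnd β) β (.eq (put p β) (put p (.var (bnd β))))
        = .eq (put p β) (put p β) := by
      simp [Fml.subst, subst_put, tsubst_fresh (le_refl (bnd β)), Tm.subst]
    rw [this]; exact .refl _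
  obtain ⟨m, d⟩ := primR hP _ _ d0
  refine ⟨m, ?_⟩
  have : Fml.subst (bnd β) α (.eq (put p β) (put p (.var (bnd β))))
      = .eq (put p β) (put p α) := by
    simp [Fml.subst, subst_put, tsubst_fresh (le_refl (bnd β)), Tm.subst]
  rwa [this] at d

lemma reflStep2 {S : Fml → Prop} {p₁ : List Nat} {c : List Nat} {α₂ β₁ β₂ : Tm}
    (h1 : Prim prec S β₁ (put c α₂)) (h2 : Prim prec S β₂ α₂) :
    ∃ m, Dh prec m S (.eq (put p₁ β₁) (put p₁ (put c β₂))) := by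
  obtain ⟨A, B, hS, hcase⟩ := h1
  rcases hcase with ⟨hp, rfl, rfl⟩ | ⟨hp, rfl, rfl⟩
  · -- A = β₁, B = put c α₂, prec A B; e := .eq A (put c β₂)
    set m0 := bnd A with hm0
    have hmem : S (Fml.subst m0 α₂ (.eq A (put c (.var m0)))) := by
      have : Fml.subst m0 α₂ (.eq A (put c (.var m0))) = .eq A (put c α₂) := by
        simp [Fml.subst, subst_put, tsubst_fresh (le_refl (bnd A)), Tm.subst, hm0]
      rw [this]; exact hS
    have he : Fml.subst m0 β₂ (.eq A (put c (.var m0))) = .eq A (put c β₂) := by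
      simp [Fml.subst, subst_put, tsubst_fresh (le_refl (bnd A)), Tm.subst, hm0]
    have hE : Enrich prec S (.eq A (put c β₂)) := ⟨_, m0, α₂, β₂, h2, hmem, he⟩
    obtain ⟨m, d⟩ := memEq (S := ins (.eq A (put c β₂)) S)
      (A := A) (B := put c β₂) (Or.inl rfl) p₁
    exact disch hE d
  · -- B = β₁, A = put c α₂, ¬ prec A B; e := .eq (put c β₂) B
    set m0 := bnd B with hm0
    have hmem : S (Fml.subst m0 α₂ (.eq (put c (.var m0)) B)) := by
      have : Fml.subst m0 α₂ (.eq (put c (.var m0)) B) = .eq (put c α₂) B := by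
        simp [Fml.subst, subst_put, tsubst_fresh (le_refl (bnd B)), Tm.subst, hm0]
      rw [this]; exact hS
    have he : Fml.subst m0 β₂ (.eq (put c (.var m0)) B) = .eq (put c β₂) B := by
      simp [Fml.subst, subst_put, tsubst_fresh (le_refl (bnd B)), Tm.subst, hm0]
    have hE : Enrich prec S (.eq (put c β₂) B) := ⟨_, m0, α₂, β₂, h2, hmem, he⟩
    obtain ⟨m, d⟩ := memEq' (S := ins (.eq (put c β₂) B) S)
      (A := put c β₂) (B := B) (Or.inl rfl) p₁
    exact disch hE d

lemma reflStep2' {S : Fml → Prop} {p₁ : List Nat} {c : List Nat} {α₂ β₁ β₂ : Tm}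
    (h1 : Prim prec S β₁ (put c α₂)) (h2 : Prim prec S β₂ α₂) :
    ∃ m, Dh prec m S (.eq (put p₁ (put c β₂)) (put p₁ β₁)) := by
  obtain ⟨A, B, hS, hcase⟩ := h1
  rcases hcase with ⟨hp, rfl, rfl⟩ | ⟨hp, rfl, rfl⟩
  · set m0 := bnd A with hm0
    have hmem : S (Fml.subst m0 α₂ (.eq A (put c (.var m0)))) := by
      have : Fml.subst m0 α₂ (.eq A (put c (.var m0))) = .eq A (put c α₂) := by
        simp [Fml.subst, subst_put, tsubst_fresh (le_refl (bnd A)), Tm.subst, hm0]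
      rw [this]; exact hS
    have he : Fml.subst m0 β₂ (.eq A (put c (.var m0))) = .eq A (put c β₂) := by
      simp [Fml.subst, subst_put, tsubst_fresh (le_refl (bnd A)), Tm.subst, hm0]
    have hE : Enrich prec S (.eq A (put c β₂)) := ⟨_, m0, α₂, β₂, h2, hmem, he⟩
    obtain ⟨m, d⟩ := memEq' (S := ins (.eq A (put c β₂)) S)
      (A := A) (B := put c β₂) (Or.inl rfl) p₁
    exact disch hE d
  · set m0 := bnd B with hm0
    have hmem : S (Fml.subst m0 α₂ (.eq (put c (.var m0)) B)) := by
      have : Fml.subst m0 α₂ (.eq (put c (.var m0)) B) = .eq (put c α₂) B := by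
        simp [Fml.subst, subst_put, tsubst_fresh (le_refl (bnd B)), Tm.subst, hm0]
      rw [this]; exact hS
    have he : Fml.subst m0 β₂ (.eq (put c (.var m0)) B) = .eq (put c β₂) B := by
      simp [Fml.subst, subst_put, tsubst_fresh (le_refl (bnd B)), Tm.subst, hm0]
    have hE : Enrich prec S (.eq (put c β₂) B) := ⟨_, m0, α₂, β₂, h2, hmem, he⟩
    obtain ⟨m, d⟩ := memEq (S := ins (.eq (put c β₂) B) S)
      (A := put c β₂) (B := B) (Or.inl rfl) p₁
    exact disch hE d

lemma reflCase {S : Fml → Prop} {t : Tm} {Y : Fml}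
    (h : Lift (PTm prec S) (.eq t t) Y) : ∃ m, Dh prec m S Y := by
  cases h with
  | eq h1 h2 =>
    rcases h1 with h1 | ⟨p₁, α₁, β₁, hP1, ht1, rfl⟩
    · rcases h2 with h2 | ⟨p₂, α₂, β₂, hP2, ht2, rfl⟩
      · subst h1; subst h2; exact ⟨0, .refl t⟩
      · subst h1; subst ht2; exact reflStep1 hP2 p₂
    · rcases h2 with h2 | ⟨p₂, α₂, β₂, hP2, ht2, rfl⟩
      · subst h2; subst ht1; exact reflStep1' hP1 p₁
      · rw [ht1] at ht2
        rcases put_overlap p₁ α₁ p₂ α₂ ht2 with ⟨c, rfl, rfl⟩ | ⟨c, rfl, rfl⟩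
        · -- p₂ = p₁ ++ c, α₁ = put c α₂
          rw [put_append]
          exact reflStep2 hP1 hP2
        · -- p₁ = p₂ ++ c, α₂ = put c α₁
          rw [put_append]
          exact reflStep2' hP2 hP1

end CFS
namespace CFS

variable {prec : Tm → Tm → Prop}

/-! ### Merging a rule application with a parallel rewrite -/

/-- a member equation `X = Y` always allows passing from `X` to `Y`, either by
a single context-oriented parallel step or by a primitive rule step -/
lemma stepOfMem₁ {S : Fml → Prop} {X Y : Tm} (h : S (.eq X Y)) (P : List Nat) :
    ∃ p, PTm prec S (put P X) p ∧ ChT (Prim prec S) p (put P Y) := by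
  by_cases hp : prec X Y
  · exact ⟨put P X, Or.inl rfl, .cons P ⟨X, Y, h, Or.inl ⟨hp, rfl, rfl⟩⟩ .nil⟩
  · exact ⟨put P Y, Or.inr ⟨P, X, Y, ⟨X, Y, h, Or.inr ⟨hp, rfl, rfl⟩⟩, rfl, rfl⟩, .nil⟩

lemma stepOfMem₂ {S : Fml → Prop} {X Y : Tm} (h : S (.eq Y X)) (P : List Nat) :
    ∃ p, PTm prec S (put P X) p ∧ ChT (Prim prec S) p (put P Y) := by
  by_cases hp : prec Y X
  · exact ⟨put P Y, Or.inr ⟨P, X, Y, ⟨Y, X, h, Or.inl ⟨hp, rfl, rfl⟩⟩, rfl, rfl⟩, .nil⟩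
  · exact ⟨put P X, Or.inl rfl, .cons P ⟨Y, X, h, Or.inr ⟨hp, rfl, rfl⟩⟩ .nil⟩

lemma mergeT {S : Fml → Prop} {u t : Tm} (hut : Prim prec S u t) (w : Nat) (g : Tm)
    {y : Tm} (h : PTm prec S (Tm.subst w t g) y) :
    ∃ (E : List Fml) (p : Tm), (∀ e ∈ E, Enrich prec S e) ∧
      PTm prec (SE S E) (Tm.subst w u g) p ∧ ChT (Prim prec (SE S E)) p y := by
  by_cases hb : bs g = .var w
  · rw [subst_bs_var hb] at h
    rw [subst_bs_var hb]
    rcases h with h | ⟨p₀, α, β, hP, hqt, rfl⟩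
    · -- trivial parallel step: reapply the rule
      subst h
      exact ⟨[], put (sp g) u, by simp, Or.inl rfl,
        .cons (sp g) (prim_mono (sub_se []) hut) .nil⟩
    · rcases put_overlap (sp g) t p₀ α hqt with ⟨c, rfl, rfl⟩ | ⟨c, hsp0, rfl⟩
      · -- p₀ = sp g ++ c, t = put c α : enrich the rule equation at its α-suffix
        obtain ⟨A, B, hS, hcase⟩ := hut
        rcases hcase with ⟨hp, rfl, rfl⟩ | ⟨hp, rfl, rfl⟩
        · -- A = u, B = t = put c α; new equation  .eq A (put c β)
          have hmem : S (Fml.subst (bnd A) α (.eq A (put c (.var (bnd A))))) := by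
            have : Fml.subst (bnd A) α (.eq A (put c (.var (bnd A)))) = .eq A (put c α) := by
              simp [Fml.subst, subst_put, tsubst_fresh (le_refl (bnd A)), Tm.subst]
            rw [this]; exact hS
          have he : Fml.subst (bnd A) β (.eq A (put c (.var (bnd A)))) = .eq A (put c β) := by
            simp [Fml.subst, subst_put, tsubst_fresh (le_refl (bnd A)), Tm.subst]
          have hE : Enrich prec S (.eq A (put c β)) := ⟨_, bnd A, α, β, hP, hmem, he⟩
          obtain ⟨p, hptm, hch⟩ := stepOfMem₁ (prec := prec)
            (S := SE S [.eq A (put c β)]) (X := A) (Y := put c β)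
            (Or.inl (List.mem_singleton.2 rfl)) (sp g)
          refine ⟨[.eq A (put c β)], p, ?_, hptm, ?_⟩
          · intro e hel
            rcases List.mem_singleton.1 hel with rfl
            exact hE
          · rw [put_append]
            exact hch
        · -- B = u, A = t = put c α; new equation  .eq (put c β) B
          have hmem : S (Fml.subst (bnd B) α (.eq (put c (.var (bnd B))) B)) := by
            have : Fml.subst (bnd B) α (.eq (put c (.var (bnd B))) B) = .eq (put c α) B := by
              simp [Fml.subst, subst_put, tsubst_fresh (le_refl (bnd B)), Tm.subst]
            rw [this]; exact hS
          have he : Fml.subst (bnd B) β (.eq (put c (.var (bnd B))) B) = .eq (put c β) B := by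
            simp [Fml.subst, subst_put, tsubst_fresh (le_refl (bnd B)), Tm.subst]
          have hE : Enrich prec S (.eq (put c β) B) := ⟨_, bnd B, α, β, hP, hmem, he⟩
          obtain ⟨p, hptm, hch⟩ := stepOfMem₂ (prec := prec)
            (S := SE S [.eq (put c β) B]) (X := B) (Y := put c β)
            (Or.inl (List.mem_singleton.2 rfl)) (sp g)
          refine ⟨[.eq (put c β) B], p, ?_, hptm, ?_⟩
          · intro e hel
            rcases List.mem_singleton.1 hel with rfl
            exact hE
          · rw [put_append]
            exact hch
      · -- sp g = p₀ ++ c, α = put c t : enrich the parallel-step equation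
        have hsp := hsp0
        obtain ⟨A, B, hS, hcase⟩ := hP
        rcases hcase with ⟨hp, rfl, rfl⟩ | ⟨hp, rfl, rfl⟩
        · -- A = β, B = α = put c t; new equation .eq A (put c u)
          have hmem : S (Fml.subst (bnd A) t (.eq A (put c (.var (bnd A))))) := by
            have : Fml.subst (bnd A) t (.eq A (put c (.var (bnd A)))) = .eq A (put c t) := by
              simp [Fml.subst, subst_put, tsubst_fresh (le_refl (bnd A)), Tm.subst]
            rw [this]; exact hS
          have he : Fml.subst (bnd A) u (.eq A (put c (.var (bnd A)))) = .eq A (put c u) := by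
            simp [Fml.subst, subst_put, tsubst_fresh (le_refl (bnd A)), Tm.subst]
          have hE : Enrich prec S (.eq A (put c u)) := ⟨_, bnd A, t, u, hut, hmem, he⟩
          obtain ⟨p, hptm, hch⟩ := stepOfMem₂ (prec := prec)
            (S := SE S [.eq A (put c u)]) (X := put c u) (Y := A)
            (Or.inl (List.mem_singleton.2 rfl)) p₀
          refine ⟨[.eq A (put c u)], p, ?_, ?_, hch⟩
          · intro e hel
            rcases List.mem_singleton.1 hel with rfl
            exact hE
          · rw [hsp, put_append]
            exact hptm
        · -- B = β, A = α = put c t; new equation .eq (put c u) B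
          have hmem : S (Fml.subst (bnd B) t (.eq (put c (.var (bnd B))) B)) := by
            have : Fml.subst (bnd B) t (.eq (put c (.var (bnd B))) B) = .eq (put c t) B := by
              simp [Fml.subst, subst_put, tsubst_fresh (le_refl (bnd B)), Tm.subst]
            rw [this]; exact hS
          have he : Fml.subst (bnd B) u (.eq (put c (.var (bnd B))) B) = .eq (put c u) B := by
            simp [Fml.subst, subst_put, tsubst_fresh (le_refl (bnd B)), Tm.subst]
          have hE : Enrich prec S (.eq (put c u) B) := ⟨_, bnd B, t, u, hut, hmem, he⟩
          obtain ⟨p, hptm, hch⟩ := stepOfMem₁ (prec := prec)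
            (S := SE S [.eq (put c u) B]) (X := put c u) (Y := B)
            (Or.inl (List.mem_singleton.2 rfl)) p₀
          refine ⟨[.eq (put c u) B], p, ?_, ?_, hch⟩
          · intro e hel
            rcases List.mem_singleton.1 hel with rfl
            exact hE
          · rw [hsp, put_append]
            exact hptm
  · rw [subst_bs_ne hb] at h
    rw [subst_bs_ne hb]
    exact ⟨[], y, by simp, ptm_mono (sub_se []) h, .nil⟩

end CFS
namespace CFS

variable {prec : Tm → Tm → Prop}

lemma mergeF {S : Fml → Prop} {u t : Tm} (hut : Prim prec S u t) (w : Nat) :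
    ∀ (G : Fml) {Y : Fml}, Lift (PTm prec S) (G.subst w t) Y →
    ∃ (E : List Fml) (P : Fml), (∀ e ∈ E, Enrich prec S e) ∧
      Lift (PTm prec (SE S E)) (G.subst w u) P ∧ ChF (Prim prec (SE S E)) P Y := by
  intro G
  induction G with
  | eq a b =>
      intro Y h
      simp only [Fml.subst] at h ⊢
      cases h with
      | @eq _ y₁ _ y₂ h₁ h₂ =>
        obtain ⟨E₁, p₁, hE₁, hp₁, hc₁⟩ := mergeT hut w a h₁
        obtain ⟨E₂, p₂, hE₂, hp₂, hc₂⟩ := mergeT hut w b h₂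
        refine ⟨E₁ ++ E₂, .eq p₁ p₂, ?_, ?_, ?_⟩
        · intro e hel
          rcases List.mem_append.1 hel with h' | h'
          · exact hE₁ e h'
          · exact hE₂ e h'
        · exact .eq (ptm_mono (se_append_left E₁ E₂) hp₁) (ptm_mono (se_append_right E₁ E₂) hp₂)
        · refine chF_append
            (chT_lift (fun z => .eq z p₂)
              (fun u' t' q => .eq (Or.inr ⟨q, rfl, rfl⟩) (Or.inl rfl))
              (chT_mono (fun a' b' => prim_mono (se_append_left E₁ E₂)) hc₁))
            (chT_lift (fun z => .eq y₁ z)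
              (fun u' t' q => .eq (Or.inl rfl) (Or.inr ⟨q, rfl, rfl⟩))
              (chT_mono (fun a' b' => prim_mono (se_append_right E₁ E₂)) hc₂))
  | atom n a =>
      intro Y h
      simp only [Fml.subst] at h ⊢
      cases h with
      | atom _ h₁ =>
        obtain ⟨E₁, p₁, hE₁, hp₁, hc₁⟩ := mergeT hut w a h₁
        exact ⟨E₁, .atom n p₁, hE₁, .atom n hp₁,
          chT_lift (fun z => .atom n z) (fun u' t' q => .atom n (Or.inr ⟨q, rfl, rfl⟩)) hc₁⟩
  | imp A B ihA ihB =>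
      intro Y h
      simp only [Fml.subst] at h ⊢
      cases h with
      | @imp _ A' _ B' hA hB =>
        obtain ⟨E₁, P₁, hE₁, hP₁, hc₁⟩ := ihA hA
        obtain ⟨E₂, P₂, hE₂, hP₂, hc₂⟩ := ihB hB
        refine ⟨E₁ ++ E₂, .imp P₁ P₂, ?_, ?_, ?_⟩
        · intro e hel
          rcases List.mem_append.1 hel with h' | h'
          · exact hE₁ e h'
          · exact hE₂ e h'
        · exact .imp (lift_mono (fun _ _ => ptm_mono (se_append_left E₁ E₂)) hP₁)
            (lift_mono (fun _ _ => ptm_mono (se_append_right E₁ E₂)) hP₂)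
        · refine chF_append
            (chF_lift (fun X => .imp X P₂) (fun u' t' _ _ hq => .imp hq (lift_rfl (qtm_rfl u' t') _))
              (chF_mono (fun a' b' => prim_mono (se_append_left E₁ E₂)) hc₁))
            (chF_lift (fun Z => .imp A' Z) (fun u' t' _ _ hq => .imp (lift_rfl (qtm_rfl u' t') _) hq)
              (chF_mono (fun a' b' => prim_mono (se_append_right E₁ E₂)) hc₂))
  | and A B ihA ihB =>
      intro Y h
      simp only [Fml.subst] at h ⊢
      cases h with
      | @and _ A' _ B' hA hB =>
        obtain ⟨E₁, P₁, hE₁, hP₁, hc₁⟩ := ihA hA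
        obtain ⟨E₂, P₂, hE₂, hP₂, hc₂⟩ := ihB hB
        refine ⟨E₁ ++ E₂, .and P₁ P₂, ?_, ?_, ?_⟩
        · intro e hel
          rcases List.mem_append.1 hel with h' | h'
          · exact hE₁ e h'
          · exact hE₂ e h'
        · exact .and (lift_mono (fun _ _ => ptm_mono (se_append_left E₁ E₂)) hP₁)
            (lift_mono (fun _ _ => ptm_mono (se_append_right E₁ E₂)) hP₂)
        · refine chF_append
            (chF_lift (fun X => .and X P₂) (fun u' t' _ _ hq => .and hq (lift_rfl (qtm_rfl u' t') _))
              (chF_mono (fun a' b' => prim_mono (se_append_left E₁ E₂)) hc₁))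
            (chF_lift (fun Z => .and A' Z) (fun u' t' _ _ hq => .and (lift_rfl (qtm_rfl u' t') _) hq)
              (chF_mono (fun a' b' => prim_mono (se_append_right E₁ E₂)) hc₂))
  | or A B ihA ihB =>
      intro Y h
      simp only [Fml.subst] at h ⊢
      cases h with
      | @or _ A' _ B' hA hB =>
        obtain ⟨E₁, P₁, hE₁, hP₁, hc₁⟩ := ihA hA
        obtain ⟨E₂, P₂, hE₂, hP₂, hc₂⟩ := ihB hB
        refine ⟨E₁ ++ E₂, .or P₁ P₂, ?_, ?_, ?_⟩
        · intro e hel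
          rcases List.mem_append.1 hel with h' | h'
          · exact hE₁ e h'
          · exact hE₂ e h'
        · exact .or (lift_mono (fun _ _ => ptm_mono (se_append_left E₁ E₂)) hP₁)
            (lift_mono (fun _ _ => ptm_mono (se_append_right E₁ E₂)) hP₂)
        · refine chF_append
            (chF_lift (fun X => .or X P₂) (fun u' t' _ _ hq => .or hq (lift_rfl (qtm_rfl u' t') _))
              (chF_mono (fun a' b' => prim_mono (se_append_left E₁ E₂)) hc₁))
            (chF_lift (fun Z => .or A' Z) (fun u' t' _ _ hq => .or (lift_rfl (qtm_rfl u' t') _) hq)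
              (chF_mono (fun a' b' => prim_mono (se_append_right E₁ E₂)) hc₂))
  | neg A ihA =>
      intro Y h
      simp only [Fml.subst] at h ⊢
      cases h with
      | neg hA =>
        obtain ⟨E₁, P₁, hE₁, hP₁, hc₁⟩ := ihA hA
        exact ⟨E₁, .neg P₁, hE₁, .neg hP₁,
          chF_lift (fun X => .neg X) (fun u' t' _ _ hq => .neg hq) hc₁⟩
  | all x A ihA =>
      intro Y h
      simp only [Fml.subst] at h ⊢
      by_cases hxw : x = w
      · rw [if_pos hxw] at h ⊢
        cases h with
        | all _ hA =>
          exact ⟨[], _, by simp, .all x (lift_mono (fun _ _ => ptm_mono (sub_se [])) hA), .nil⟩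
      · rw [if_neg hxw] at h ⊢
        cases h with
        | all _ hA =>
          obtain ⟨E₁, P₁, hE₁, hP₁, hc₁⟩ := ihA hA
          exact ⟨E₁, .all x P₁, hE₁, .all x hP₁,
            chF_lift (fun X => .all x X) (fun u' t' _ _ hq => .all x hq) hc₁⟩
  | ex x A ihA =>
      intro Y h
      simp only [Fml.subst] at h ⊢
      by_cases hxw : x = w
      · rw [if_pos hxw] at h ⊢
        cases h with
        | ex _ hA =>
          exact ⟨[], _, by simp, .ex x (lift_mono (fun _ _ => ptm_mono (sub_se [])) hA), .nil⟩
      · rw [if_neg hxw] at h ⊢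
        cases h with
        | ex _ hA =>
          obtain ⟨E₁, P₁, hE₁, hP₁, hc₁⟩ := ihA hA
          exact ⟨E₁, .ex x P₁, hE₁, .ex x hP₁,
            chF_lift (fun X => .ex x X) (fun u' t' _ _ hq => .ex x hq) hc₁⟩

/-! ### The main parallel-rewrite admissibility theorem -/

lemma ruleCase {S : Fml → Prop} {u t : Tm} {G : Fml} {w : Nat} {Y : Fml} {n' : Nat}
    (hut : Prim prec S u t) (d' : Dh prec n' S (G.subst w u))
    (h : Lift (PTm prec S) (G.subst w t) Y)
    (IH : ∀ (S' : Fml → Prop) (X' Y' : Fml), Dh prec n' S' X' →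
       Lift (PTm prec S') X' Y' → ∃ m, Dh prec m S' Y') :
    ∃ m, Dh prec m S Y := by
  obtain ⟨E, P, hE, hP, hch⟩ := mergeF hut w G h
  obtain ⟨m₁, dP⟩ := IH (SE S E) _ _ (dh_mono d' (sub_se E)) hP
  obtain ⟨m₂, dY⟩ := rc_sound hch dP
  exact dischList E hE dY

theorem ct : ∀ (n : Nat) (S : Fml → Prop) (X Y : Fml), Dh prec n S X →
    Lift (PTm prec S) X Y → ∃ m, Dh prec m S Y := by
  intro n
  induction n using Nat.strong_induction_on with
  | _ n ih =>
    intro S X Y d h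
    cases d with
    | ax hX => exact axChain (dec h) S (fun a b hab => hab) hX
    | refl t => exact reflCase h
    | @r1 n' _ F v r s hp hS d' =>
        exact ruleCase ⟨r, s, hS, Or.inl ⟨hp, rfl, rfl⟩⟩ d' h
          (fun S' X' Y' d'' h'' => ih n' (Nat.lt_succ_self n') S' X' Y' d'' h'')
    | @r2 n' _ F v r s hp hS d' =>
        exact ruleCase ⟨s, r, hS, Or.inr ⟨hp, rfl, rfl⟩⟩ d' h
          (fun S' X' Y' d'' h'' => ih n' (Nat.lt_succ_self n') S' X' Y' d'' h'')
    | @l1 n' _ F v r s _ hp hS hmem d' =>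
        obtain ⟨m, dd⟩ := ih n' (Nat.lt_succ_self n') _ _ _ d'
          (lift_mono (fun _ _ => ptm_mono (fun x hx => Or.inr hx)) h)
        exact ⟨m + 1, .l1 hp hS hmem dd⟩
    | @l2 n' _ F v r s _ hp hS hmem d' =>
        obtain ⟨m, dd⟩ := ih n' (Nat.lt_succ_self n') _ _ _ d'
          (lift_mono (fun _ _ => ptm_mono (fun x hx => Or.inr hx)) h)
        exact ⟨m + 1, .l2 hp hS hmem dd⟩

end CFS
namespace CFS

variable {prec : Tm → Tm → Prop}

/-! ### Unrestricted rewriting with derived equations (CNG admissibility) -/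

lemma cngRule {S : Fml → Prop} {u t e₁ e₂ : Tm} {w : Nat}
    (hut : Prim prec S u t)
    (IH1 : ∀ (K : Fml) (v : Nat) (k : Nat), Dh prec k S (K.subst v (Tm.subst w u e₁)) →
      ∃ m, Dh prec m S (K.subst v (Tm.subst w u e₂)))
    (K : Fml) (v : Nat) (k : Nat) (d2 : Dh prec k S (K.subst v (Tm.subst w t e₁))) :
    ∃ m, Dh prec m S (K.subst v (Tm.subst w t e₂)) := by
  have hbK : fbnd K ≤ max (fbnd K) (max (bnd e₁) (bnd e₂)) := le_max_left _ _
  have hb1 : bnd e₁ ≤ max (fbnd K) (max (bnd e₁) (bnd e₂)) :=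
    le_trans (le_max_left _ _) (le_max_right _ _)
  have hb2 : bnd e₂ ≤ max (fbnd K) (max (bnd e₁) (bnd e₂)) :=
    le_trans (le_max_right _ _) (le_max_right _ _)
  set v₀ := max (fbnd K) (max (bnd e₁) (bnd e₂))
  set K' := Fml.subst v (.var v₀) K with hK'
  have hK : ∀ c : Tm, Fml.subst v₀ c K' = Fml.subst v c K := fun c => frename hbK v c
  have hG : ∀ (e : Tm), bnd e ≤ v₀ → ∀ c : Tm,
      Fml.subst v₀ c (Fml.subst v₀ (Tm.subst w (.var v₀) e) K')
        = Fml.subst v₀ (Tm.subst w c e) K' := by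
    intro e he c
    rw [fcomp, trename he]
  have d2' : Dh prec k S (Fml.subst v₀ t (Fml.subst v₀ (Tm.subst w (.var v₀) e₁) K')) := by
    rw [hG e₁ hb1 t, hK]; exact d2
  obtain ⟨m₁, dm1⟩ := ct k S _ _ d2' (ctxsub hut _ v₀)
  rw [hG e₁ hb1 u] at dm1
  obtain ⟨m₂, dm2⟩ := IH1 K' v₀ m₁ dm1
  have dm2' : Dh prec m₂ S (Fml.subst v₀ u (Fml.subst v₀ (Tm.subst w (.var v₀) e₂) K')) := by
    rw [hG e₂ hb2 u]; exact dm2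
  obtain ⟨m₃, dm3⟩ := primR hut _ v₀ dm2'
  rw [hG e₂ hb2 t, hK] at dm3
  exact ⟨m₃, dm3⟩

theorem cng : ∀ (n : Nat) (S : Fml → Prop) (X : Fml), Dh prec n S X →
    ∀ (r s : Tm), X = .eq r s →
    ((∀ (K : Fml) (v : Nat) (k : Nat), Dh prec k S (K.subst v r) →
        ∃ m, Dh prec m S (K.subst v s)) ∧
     (∀ (K : Fml) (v : Nat) (k : Nat), Dh prec k S (K.subst v s) →
        ∃ m, Dh prec m S (K.subst v r))) := by
  intro n
  induction n using Nat.strong_induction_on with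
  | _ n ih =>
    intro S X d r s hX
    cases d with
    | ax hS =>
        subst hX
        constructor
        · intro K v k d2
          by_cases hp : prec r s
          · exact primR ⟨r, s, hS, Or.inl ⟨hp, rfl, rfl⟩⟩ K v d2
          · exact ct k S _ _ d2 (ctxsub ⟨r, s, hS, Or.inr ⟨hp, rfl, rfl⟩⟩ K v)
        · intro K v k d2
          by_cases hp : prec r s
          · exact ct k S _ _ d2 (ctxsub ⟨r, s, hS, Or.inl ⟨hp, rfl, rfl⟩⟩ K v)
          · exact primR ⟨r, s, hS, Or.inr ⟨hp, rfl, rfl⟩⟩ K v d2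
    | refl t =>
        injection hX with h1 h2
        subst h1; subst h2
        exact ⟨fun K v k d2 => ⟨k, d2⟩, fun K v k d2 => ⟨k, d2⟩⟩
    | @r1 n' _ F v' r' s' hp hS d' =>
        have hut : Prim prec S r' s' := ⟨r', s', hS, Or.inl ⟨hp, rfl, rfl⟩⟩
        cases F with
        | eq e₁ e₂ =>
            simp only [Fml.subst] at hX
            injection hX with h1 h2
            subst h1; subst h2
            have d'' : Dh prec n' S (.eq (Tm.subst v' r' e₁) (Tm.subst v' r' e₂)) := d'
            have IHpair := ih n' (Nat.lt_succ_self n') S _ d'' _ _ rfl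
            exact ⟨fun K v k d2 => cngRule hut IHpair.1 K v k d2,
                   fun K v k d2 => cngRule hut IHpair.2 K v k d2⟩
        | atom _ _ => exact absurd hX (by simp [Fml.subst])
        | imp _ _ => exact absurd hX (by simp [Fml.subst])
        | and _ _ => exact absurd hX (by simp [Fml.subst])
        | or _ _ => exact absurd hX (by simp [Fml.subst])
        | neg _ => exact absurd hX (by simp [Fml.subst])
        | all _ _ => exact absurd hX (by simp [Fml.subst])
        | ex _ _ => exact absurd hX (by simp [Fml.subst])
    | @r2 n' _ F v' r' s' hp hS d' =>
        have hut : Prim prec S r' s' := ⟨s', r', hS, Or.inr ⟨hp, rfl, rfl⟩⟩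
        cases F with
        | eq e₁ e₂ =>
            simp only [Fml.subst] at hX
            injection hX with h1 h2
            subst h1; subst h2
            have d'' : Dh prec n' S (.eq (Tm.subst v' r' e₁) (Tm.subst v' r' e₂)) := d'
            have IHpair := ih n' (Nat.lt_succ_self n') S _ d'' _ _ rfl
            exact ⟨fun K v k d2 => cngRule hut IHpair.1 K v k d2,
                   fun K v k d2 => cngRule hut IHpair.2 K v k d2⟩
        | atom _ _ => exact absurd hX (by simp [Fml.subst])
        | imp _ _ => exact absurd hX (by simp [Fml.subst])
        | and _ _ => exact absurd hX (by simp [Fml.subst])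
        | or _ _ => exact absurd hX (by simp [Fml.subst])
        | neg _ => exact absurd hX (by simp [Fml.subst])
        | all _ _ => exact absurd hX (by simp [Fml.subst])
        | ex _ _ => exact absurd hX (by simp [Fml.subst])
    | @l1 n' _ F v' r' s' _ hp hS hmem d' =>
        subst hX
        have IHpair := ih n' (Nat.lt_succ_self n') _ _ d' _ _ rfl
        constructor
        · intro K v k d2
          obtain ⟨m, dd⟩ := IHpair.1 K v k (dh_mono d2 (fun x hx => Or.inr hx))
          exact ⟨m + 1, .l1 hp hS hmem dd⟩
        · intro K v k d2
          obtain ⟨m, dd⟩ := IHpair.2 K v k (dh_mono d2 (fun x hx => Or.inr hx))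
          exact ⟨m + 1, .l1 hp hS hmem dd⟩
    | @l2 n' _ F v' r' s' _ hp hS hmem d' =>
        subst hX
        have IHpair := ih n' (Nat.lt_succ_self n') _ _ d' _ _ rfl
        constructor
        · intro K v k d2
          obtain ⟨m, dd⟩ := IHpair.1 K v k (dh_mono d2 (fun x hx => Or.inr hx))
          exact ⟨m + 1, .l2 hp hS hmem dd⟩
        · intro K v k d2
          obtain ⟨m, dd⟩ := IHpair.2 K v k (dh_mono d2 (fun x hx => Or.inr hx))
          exact ⟨m + 1, .l2 hp hS hmem dd⟩

end CFS
namespace CFS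

variable {prec : Tm → Tm → Prop}

/-! ### Structural admissibility in the list-based calculus -/

section DerInfra

variable {ok : EqRule → Fml → Nat → Tm → Tm → Prop} {cut : Bool}

lemma permAux : ∀ {l l' : List Fml}, l.Perm l' → ∀ (Γ₀ : List Fml) (H : Fml),
    Der ok cut (Γ₀ ++ l) H → Der ok cut (Γ₀ ++ l') H := by
  intro l l' hp
  induction hp with
  | nil => exact fun Γ₀ H d => d
  | @cons a l₁ l₂ _ ih =>
      intro Γ₀ H d
      have := ih (Γ₀ ++ [a]) H (by simpa [List.append_assoc] using d)
      simpa [List.append_assoc] using this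
  | @swap a b l₁ =>
      intro Γ₀ H d
      exact Der.exch d
  | trans _ _ ih1 ih2 => exact fun Γ₀ H d => ih2 Γ₀ H (ih1 Γ₀ H d)

lemma derPerm {Γ Γ' : List Fml} {H : Fml} (d : Der ok cut Γ H) (hp : Γ.Perm Γ') :
    Der ok cut Γ' H := by
  have := permAux hp [] H (by simpa using d)
  simpa using this

lemma wkAll {Λ : List Fml} {H : Fml} (d : Der ok cut Λ H) :
    ∀ (Γ : List Fml), Der ok cut (Γ ++ Λ) H := by
  intro Γ
  induction Γ with
  | nil => simpa using d
  | cons g Γ ih => exact Der.wk g ih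

lemma memAx {Γ : List Fml} {F : Fml} (hF : F ∈ Γ) : Der ok cut Γ F := by
  have d1 : Der ok cut (Γ.erase F ++ [F]) F := wkAll (Der.ax F) (Γ.erase F)
  refine derPerm d1 ?_
  exact (List.perm_append_singleton F (Γ.erase F)).trans (List.perm_cons_erase hF).symm

lemma contrMem {Γ : List Fml} {F H : Fml} (hF : F ∈ Γ) (d : Der ok cut (F :: Γ) H) :
    Der ok cut Γ H := by
  have hp := List.perm_cons_erase hF
  have d1 : Der ok cut (F :: F :: Γ.erase F) H := derPerm d (hp.cons F)
  exact derPerm (Der.contr d1) hp.symm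

end DerInfra

lemma dhToDer {n : Nat} {S : Fml → Prop} {H : Fml} (d : Dh prec n S H) :
    ∀ (Γ : List Fml), (∀ x, S x ↔ x ∈ Γ) → Der (semiOk prec) false Γ H := by
  induction d with
  | ax hS =>
      intro Γ hiff
      exact memAx ((hiff _).1 hS)
  | refl t =>
      intro Γ hiff
      have := wkAll (Λ := []) (Der.refl (ok := semiOk prec) (cut := false) t) Γ
      simpa using this
  | @r1 n' S' F v r s hp hS _ ih =>
      intro Γ hiff
      exact contrMem ((hiff _).1 hS) (Der.eq1 hp (ih Γ hiff))
  | @r2 n' S' F v r s hp hS _ ih =>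
      intro Γ hiff
      exact contrMem ((hiff _).1 hS) (Der.eq2 hp (ih Γ hiff))
  | @l1 n' S' F v r s H' hp hS hmem _ ih =>
      intro Γ hiff
      have dpre : Der (semiOk prec) false (F.subst v r :: Γ) H' := by
        refine ih (F.subst v r :: Γ) ?_
        intro x
        simp only [ins, List.mem_cons]
        exact or_congr Iff.rfl (hiff x)
      have d1 := Der.eq1l hp dpre
      have d2 : Der (semiOk prec) false (.eq r s :: F.subst v s :: Γ) H' :=
        Der.exch (Γ₁ := []) d1
      have d3 := contrMem (List.mem_cons_of_mem _ ((hiff _).1 hS)) d2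
      exact contrMem ((hiff _).1 hmem) d3
  | @l2 n' S' F v r s H' hp hS hmem _ ih =>
      intro Γ hiff
      have dpre : Der (semiOk prec) false (F.subst v r :: Γ) H' := by
        refine ih (F.subst v r :: Γ) ?_
        intro x
        simp only [ins, List.mem_cons]
        exact or_congr Iff.rfl (hiff x)
      have d1 := Der.eq2l hp dpre
      have d2 : Der (semiOk prec) false (.eq s r :: F.subst v s :: Γ) H' :=
        Der.exch (Γ₁ := []) d1
      have d3 := contrMem (List.mem_cons_of_mem _ ((hiff _).1 hS)) d2
      exact contrMem ((hiff _).1 hmem) d3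

/-! ### Semantic provability -/

inductive Prov (S : Fml → Prop) : Fml → Prop
  | hyp {F : Fml} : S F → Prov S F
  | refl (t : Tm) : Prov S (.eq t t)
  | rew {r s : Tm} {F : Fml} {v : Nat} :
      Prov S (.eq r s) → Prov S (F.subst v r) → Prov S (F.subst v s)
  | rew' {r s : Tm} {F : Fml} {v : Nat} :
      Prov S (.eq r s) → Prov S (F.subst v s) → Prov S (F.subst v r)

lemma provMono {S S' : Fml → Prop} {H : Fml} (h : Prov S H) (hS : ∀ x, S x → S' x) :
    Prov S' H := by
  induction h with
  | hyp h0 => exact .hyp (hS _ h0)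
  | refl t => exact .refl t
  | rew _ _ ih1 ih2 => exact .rew ih1 ih2
  | rew' _ _ ih1 ih2 => exact .rew' ih1 ih2

lemma provCut {S S' : Fml → Prop} {A H : Fml} (hA : Prov S A) (hH : Prov S' H)
    (sub : ∀ x, S' x → x = A ∨ S x) : Prov S H := by
  induction hH with
  | hyp h0 =>
      rcases sub _ h0 with rfl | h1
      · exact hA
      · exact .hyp h1
  | refl t => exact .refl t
  | rew _ _ ih1 ih2 => exact .rew ih1 ih2
  | rew' _ _ ih1 ih2 => exact .rew' ih1 ih2

lemma derToProv : ∀ {Γ : List Fml} {H : Fml},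
    Der (allow [.r1, .r2, .l1, .l2]) true Γ H → Prov (fun x => x ∈ Γ) H := by
  intro Γ H d
  induction d with
  | ax F => exact .hyp (List.mem_singleton.2 rfl)
  | refl t => exact .refl t
  | wk F _ ih => exact provMono ih (fun x hx => List.mem_cons_of_mem _ hx)
  | @exch Γ₁ Γ₂ F G H' _ ih =>
      refine provMono ih ?_
      intro x hx
      simp only [List.mem_append, List.mem_cons] at hx ⊢
      tauto
  | @contr Γ' F H' _ ih =>
      refine provMono ih ?_
      intro x hx
      simp only [List.mem_cons] at hx ⊢
      tauto
  | @cutr Γ' Λ F H' _ _ _ ih1 ih2 =>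
      refine provCut (provMono ih1 (fun x hx => List.mem_append.2 (Or.inl hx))) ih2 ?_
      intro x hx
      rcases List.mem_cons.1 hx with rfl | hx
      · exact Or.inl rfl
      · exact Or.inr (List.mem_append.2 (Or.inr hx))
  | @eq1 Γ' F v r s _ _ ih =>
      exact .rew (.hyp (List.mem_cons_self))
        (provMono ih (fun x hx => List.mem_cons_of_mem _ hx))
  | @eq2 Γ' F v r s _ _ ih =>
      exact Prov.rew' (r := s) (s := r) (F := F) (v := v) (.hyp (List.mem_cons_self))
        (provMono ih (fun x hx => List.mem_cons_of_mem _ hx))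
  | @eq1l Γ' F v r s H' _ _ ih =>
      refine provCut (A := F.subst v r) ?_
        (provMono ih (fun x hx => hx)) ?_
      · exact Prov.rew' (r := r) (s := s) (F := F) (v := v)
          (.hyp (List.mem_cons_of_mem _ (List.mem_cons_self)))
          (.hyp (List.mem_cons_self))
      · intro x hx
        rcases List.mem_cons.1 hx with rfl | hx
        · exact Or.inl rfl
        · exact Or.inr (List.mem_cons_of_mem _ (List.mem_cons_of_mem _ hx))
  | @eq2l Γ' F v r s H' _ _ ih =>
      refine provCut (A := F.subst v r) ?_
        (provMono ih (fun x hx => hx)) ?_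
      · exact Prov.rew (r := s) (s := r) (F := F) (v := v)
          (.hyp (List.mem_cons_of_mem _ (List.mem_cons_self)))
          (.hyp (List.mem_cons_self))
      · intro x hx
        rcases List.mem_cons.1 hx with rfl | hx
        · exact Or.inl rfl
        · exact Or.inr (List.mem_cons_of_mem _ (List.mem_cons_of_mem _ hx))
  | cng h _ _ _ _ => simp [allow] at h

lemma provToDh {S : Fml → Prop} {H : Fml} (h : Prov S H) : ∃ n, Dh prec n S H := by
  induction h with
  | hyp hS => exact ⟨0, .ax hS⟩
  | refl t => exact ⟨0, .refl t⟩
  | @rew r s F v _ _ ih1 ih2 =>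
      obtain ⟨n1, d1⟩ := ih1
      obtain ⟨n2, d2⟩ := ih2
      exact (cng n1 S _ d1 r s rfl).1 F v n2 d2
  | @rew' r s F v _ _ ih1 ih2 =>
      obtain ⟨n1, d1⟩ := ih1
      obtain ⟨n2, d2⟩ := ih2
      exact (cng n1 S _ d1 r s rfl).2 F v n2 d2

end CFS

/-- Every sequent derivable in `EQ₁₂` (with cut and all four equality rules)
has a cut-free semishortening derivation in `EQ₁₂`, with respect to any
antireflexive binary relation `≺` on terms (`r ≺ s` entails `s ⊀ r`). -/
theorem cutfree_semishortening (prec : Tm → Tm → Prop)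
    (hprec : ∀ r s, prec r s → ¬ prec s r)
    (Γ : List Fml) (F : Fml)
    (h : Der (allow [.r1, .r2, .l1, .l2]) true Γ F) :
    Der (semiOk prec) false Γ F := by
  have h1 := CFS.derToProv h
  obtain ⟨n, d⟩ := CFS.provToDh (prec := prec) h1
  exact CFS.dhToDer d Γ (fun x => Iff.rfl)
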